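/- Let A be an abelian category with enough projectives, V a subcategory with Ext¹(V, Fac V) = 0, and P a projective object. Suppose P →v V₀ → W → 0 is exact where V₀ ∈ V and v is a left V-approximation (every morphism P → V' with V' ∈ V factors through v). Then W is Ext-projective in Fac V, i.e. Ext¹(W, Z) = 0 for all Z ∈ Fac V. -/

import Mathlib

open CategoryTheory Limits Opposite

noncomputable section

universe v u

variable {C : Type u} [Category.{v} C] [Abelian C] [EnoughProjectives C]

attribute [local instance] CategoryTheory.Abelian.hasFiniteBiproducts

/-- `Fac M`: quotients of finite direct sums of objects of `M`. -/
def Fac (M : Set C) : Set C :=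
  {X | ∃ (n : ℕ) (f : Fin n → C), (∀ i, f i ∈ M) ∧
    haveI : HasBiproductsOfShape (Fin n) C := HasFiniteBiproducts.out n
    ∃ e : (⨁ f) ⟶ X, Epi e}

/-- Vanishing of `Ext¹(X, Y)`. -/
def ext1Zero (X Y : C) : Prop := Subsingleton (((Ext ℤ C 1).obj (op X)).obj Y)

/-- Vanishing of `Ext²(X, Y)`. -/
def ext2Zero (X Y : C) : Prop := Subsingleton (((Ext ℤ C 2).obj (op X)).obj Y)

/-- `v : P ⟶ V₀` is a left `M`-approximation. -/
def IsLeftApprox (M : Set C) {P V₀ : C} (v : P ⟶ V₀) : Prop :=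
  ∀ V' ∈ M, ∀ h : P ⟶ V', ∃ t : V₀ ⟶ V', v ≫ t = h

/-- `u : U₀ ⟶ X` is a right `M`-approximation. -/
def IsRightApprox (M : Set C) {U₀ X : C} (u : U₀ ⟶ X) : Prop :=
  ∀ M' ∈ M, ∀ h : M' ⟶ X, ∃ t : M' ⟶ U₀, t ≫ u = h

/-- The Ext-projective objects of `S`. -/
def ExtProj (S : Set C) : Set C := {D ∈ S | ∀ Z ∈ S, ext1Zero D Z}

/-- `M` is τ-rigid: `Ext¹(M, Fac M) = 0`. -/
def TauRigid (M : Set C) : Prop := ∀ M₀ ∈ M, ∀ X ∈ Fac M, ext1Zero M₀ X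

/-- `P` admits an exact sequence `P ⟶ Ma ⟶ Mb ⟶ 0` with `Ma, Mb ∈ M` and the
first map a left `M`-approximation. -/
def HasApproxSeq (M : Set C) (P : C) : Prop :=
  ∃ M₀ ∈ M, ∃ M₁ ∈ M, ∃ (m : P ⟶ M₀) (g : M₀ ⟶ M₁) (w : m ≫ g = 0),
    (ShortComplex.mk m g w).Exact ∧ Epi g ∧ IsLeftApprox M m

/-- `M` is a support τ-tilting subcategory. -/
def SupportTauTilting (M : Set C) : Prop :=
  TauRigid M ∧ ∀ P : C, Projective P → HasApproxSeq M P

/-- `0 ⟶ X ⟶ Y ⟶ Z ⟶ 0` is a short exact sequence. -/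
def SES {X Y Z : C} (f : X ⟶ Y) (g : Y ⟶ Z) : Prop :=
  ∃ w : f ≫ g = 0, (ShortComplex.mk f g w).Exact ∧ Mono f ∧ Epi g

/-- `U` is hereditary: `Ext²(U, −) = 0`. -/
def Hereditary1 (U : Set C) : Prop := ∀ U₀ ∈ U, ∀ X : C, ext2Zero U₀ X

/-- `U` is partial tilting. -/
def PartialTilting (U : Set C) : Prop :=
  Hereditary1 U ∧ ∀ U₀ ∈ U, ∀ U₁ ∈ U, ext1Zero U₀ U₁

/-- `U` is tilting. -/
def Tilting (U : Set C) : Prop :=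
  PartialTilting U ∧ ∀ P : C, Projective P →
    ∃ Ua ∈ U, ∃ Ub ∈ U, ∃ (i : P ⟶ Ua) (p : Ua ⟶ Ub), SES i p

/-- `U^⊥₁ = {X | Ext¹(U, X) = 0}`. -/
def Perp1 (U : Set C) : Set C := {X | ∀ U₀ ∈ U, ext1Zero U₀ X}

/-- `M` is closed under finite direct sums and direct summands. -/
def AdditivelyClosed (M : Set C) : Prop :=
  (∀ (n : ℕ) (f : Fin n → C), (∀ i, f i ∈ M) →
    haveI : HasBiproductsOfShape (Fin n) C := HasFiniteBiproducts.out n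
    (⨁ f) ∈ M) ∧
  (∀ M₀ ∈ M, ∀ (X : C) (r : M₀ ⟶ X) (s : X ⟶ M₀), s ≫ r = 𝟙 X → X ∈ M)

/-- The additive closure of a class of objects: direct summands of finite
direct sums of its objects. -/
def AddClosure (X : Set C) : Set C :=
  {Y | ∃ (n : ℕ) (f : Fin n → C), (∀ i, f i ∈ X) ∧
    haveI : HasBiproductsOfShape (Fin n) C := HasFiniteBiproducts.out n
    ∃ (r : (⨁ f) ⟶ Y) (s : Y ⟶ ⨁ f), s ≫ r = 𝟙 Y}

namespace Stmt3Aux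

open Projective ProjectiveResolution

lemma moduleCat_subsingleton_iff_isZero (M : ModuleCat ℤ) :
    Subsingleton M ↔ IsZero M := by
  constructor
  · intro h; exact ModuleCat.isZero_of_subsingleton M
  · intro h
    rw [IsZero.iff_id_eq_zero] at h
    refine ⟨fun a b => ?_⟩
    have ha : (𝟙 M : M ⟶ M) a = (0 : M ⟶ M) a := by rw [h]
    have hb : (𝟙 M : M ⟶ M) b = (0 : M ⟶ M) b := by rw [h]
    simp only [ModuleCat.id_apply] at ha hb
    rw [ha, hb]
    rfl

variable {Q0 X : C} (π0 : Q0 ⟶ X)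

/-- The projective resolution complex built on a given epimorphism from a projective. -/
def ofEpiComplex : ChainComplex C ℕ :=
  ChainComplex.mk' Q0 (syzygies π0) (d π0) (fun f => ⟨syzygies f, d f, by erw [Category.assoc, kernel.condition, comp_zero]⟩)

lemma ofEpiComplex_d_1_0 : (ofEpiComplex π0).d 1 0 = d π0 := by
  simp [ofEpiComplex]

lemma ofEpiComplex_d_2_1 : (ofEpiComplex π0).d 2 1 = d (d π0) := by
  simp only [ofEpiComplex, ChainComplex.mk']
  exact ChainComplex.mk_d_2_1 _ _ _ _ _ _ _

instance [Projective Q0] (n : ℕ) : Projective ((ofEpiComplex π0).X n) := by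
  obtain (_ | _ | _ | n) := n
  · exact inferInstanceAs (Projective Q0)
  · apply Projective.projective_over
  · apply Projective.projective_over
  · apply Projective.projective_over

lemma ofEpiComplex_exactAt_succ (n : ℕ) :
    (ofEpiComplex π0).ExactAt (n + 1) := by
  rw [HomologicalComplex.exactAt_iff' _ (n + 1 + 1) (n + 1) n (by simp) (by simp)]
  have h : (ofEpiComplex π0).d (n + 2) (n + 1) = _ := ChainComplex.mk'_d _ _ _ _ n
  refine (ShortComplex.exact_iff_of_iso (S₁ := ShortComplex.mk (d ((ofEpiComplex π0).d (n + 1) n))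
    ((ofEpiComplex π0).d (n + 1) n) (by erw [Category.assoc, kernel.condition, comp_zero]))
    (S₂ := (ofEpiComplex π0).sc' (n + 1 + 1) (n + 1) n)
    (ShortComplex.isoMk (ChainComplex.mk'XIso Q0 (syzygies π0) (d π0)
      (fun f => ⟨syzygies f, d f, by erw [Category.assoc, kernel.condition, comp_zero]⟩) n).symm
      (Iso.refl _) (Iso.refl _) ?_ ?_)).1 (exact_d_f ((ofEpiComplex π0).d (n + 1) n))
  · show _ ≫ (ofEpiComplex π0).d (n + 2) (n + 1) = _ ≫ 𝟙 _
    rw [h]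
    exact (Iso.inv_hom_id_assoc _ _).trans (Category.comp_id _).symm
  · dsimp
    erw [Category.id_comp, Category.comp_id]
    rfl

/-- Every map from `kernel π0` to `Z` extends to `Q0`. -/
def LiftsAlong (Z : C) : Prop :=
  ∀ h : kernel π0 ⟶ Z, ∃ ψ : Q0 ⟶ Z, kernel.ι π0 ≫ ψ = h

variable [Projective Q0] [Epi π0]

/-- A projective resolution starting from a given epimorphism from a projective. -/
def ofEpi : ProjectiveResolution X where
  complex := ofEpiComplex π0
  π := (ChainComplex.toSingle₀Equiv _ _).symm ⟨π0, by
          rw [ofEpiComplex_d_1_0]; erw [Category.assoc, kernel.condition, comp_zero]⟩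
  quasiIso := ⟨fun n => by
    cases n
    · rw [ChainComplex.quasiIsoAt₀_iff, ShortComplex.quasiIso_iff_of_zeros']
      · refine (ShortComplex.exact_and_epi_g_iff_of_iso ?_).2
          ⟨exact_d_f π0, by dsimp; infer_instance⟩
        exact ShortComplex.isoMk (Iso.refl _) (Iso.refl _) (Iso.refl _)
          (by erw [Category.id_comp, Category.comp_id]; exact (ofEpiComplex_d_1_0 π0).symm)
          (by erw [Category.id_comp, Category.comp_id]
              exact (ChainComplex.toSingle₀Equiv_symm_apply_f_zero (C := ofEpiComplex π0) π0 _).symm)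
      all_goals rfl
    · rw [quasiIsoAt_iff_exactAt']
      · apply ofEpiComplex_exactAt_succ
      · apply ChainComplex.exactAt_succ_single_obj⟩

lemma ext1Zero_iff (Z : C) :
    ext1Zero X Z ↔ LiftsAlong π0 Z := by
  set K := ofEpiComplex π0 with hK
  set L := K.linearYonedaObj ℤ Z with hL
  have e : (((Ext ℤ C 1).obj (op X)).obj Z) ≅ L.homology 1 := (ofEpi π0).isoExt 1 Z
  have h1 : ext1Zero X Z ↔ Subsingleton (L.homology 1) :=
    e.toLinearEquiv.toEquiv.subsingleton_congr
  rw [h1, moduleCat_subsingleton_iff_isZero,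
    ← HomologicalComplex.exactAt_iff_isZero_homology,
    HomologicalComplex.exactAt_iff' L 0 1 2 (by simp) (by simp),
    ShortComplex.moduleCat_exact_iff]
  have hgapp : ∀ φ : K.X 1 ⟶ Z, (L.sc' 0 1 2).g φ = K.d 2 1 ≫ φ := fun φ => rfl
  have hfapp : ∀ ψ : K.X 0 ⟶ Z, (L.sc' 0 1 2).f ψ = K.d 1 0 ≫ ψ := fun ψ => rfl
  have hd10 : K.d 1 0 = Projective.π (kernel π0) ≫ kernel.ι π0 := ofEpiComplex_d_1_0 π0
  have hd21 : K.d 2 1 = Projective.π (kernel (d π0)) ≫ kernel.ι (d π0) :=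
    ofEpiComplex_d_2_1 π0
  constructor
  · -- from exactness to lifting
    intro hex h
    have hz : (L.sc' 0 1 2).g (Projective.π (kernel π0) ≫ h) = 0 := by
      rw [hgapp, hd21]
      have : kernel.ι (d π0) ≫ Projective.π (kernel π0) = 0 := by
        rw [← cancel_mono (kernel.ι π0), zero_comp]; erw [Category.assoc]
        exact kernel.condition (d π0)
      erw [Category.assoc, ← Category.assoc (kernel.ι (d π0)), this, zero_comp, comp_zero]; rfl
    obtain ⟨ψ, hψ⟩ := hex _ hz
    erw [hfapp, hd10, Category.assoc] at hψ
    exact ⟨ψ, (cancel_epi (Projective.π (kernel π0))).1 hψ⟩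
  · -- from lifting to exactness
    intro hl x₂ hx₂
    erw [hgapp, hd21] at hx₂
    have hι : kernel.ι (d π0) ≫ x₂ = 0 := by
      rw [← cancel_epi (Projective.π (kernel (d π0))), comp_zero]
      exact (Category.assoc _ _ _).symm.trans hx₂
    have h0 : kernel.ι (Projective.π (kernel π0)) ≫ d π0 = 0 := by
      show kernel.ι (Projective.π (kernel π0)) ≫ Projective.π (kernel π0) ≫ kernel.ι π0 = 0
      rw [← Category.assoc, kernel.condition, zero_comp]
    have hι' : kernel.ι (Projective.π (kernel π0)) ≫ x₂ = 0 := by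
      have := kernel.lift_ι (d π0) (kernel.ι (Projective.π (kernel π0))) h0
      rw [← this]; erw [Category.assoc, hι, comp_zero]
    obtain ⟨ψ, hψ⟩ := hl (Abelian.epiDesc (Projective.π (kernel π0)) x₂ hι')
    refine ⟨ψ, ?_⟩
    erw [hfapp, hd10, Category.assoc, hψ, Abelian.comp_epiDesc]

end Stmt3Aux

open scoped Pseudoelement in
theorem stmt3 (V : Set C) (hV : TauRigid V) {P V₀ W : C}
    (hP : Projective P) (hV₀ : V₀ ∈ V) (v : P ⟶ V₀) (g : V₀ ⟶ W)
    (w : v ≫ g = 0) (hex : (ShortComplex.mk v g w).Exact) (hepi : Epi g)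
    (happ : IsLeftApprox V v) :
    W ∈ Fac V ∧ ∀ Z ∈ Fac V, ext1Zero W Z := by
  haveI := hP
  constructor
  · -- W ∈ Fac V
    refine ⟨1, fun _ => V₀, fun _ => hV₀, ?_⟩
    refine ⟨biproduct.desc (fun _ => g), ?_⟩
    haveI : Epi (biproduct.ι (fun _ : Fin 1 => V₀) 0 ≫ biproduct.desc (fun _ => g)) := by
      rw [biproduct.ι_desc]; exact hepi
    exact epi_of_epi (biproduct.ι (fun _ : Fin 1 => V₀) 0) _
  · intro Z hZ
    obtain ⟨n, f, hf, e, he⟩ := id hZ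
    haveI := he
    haveI : HasBiproductsOfShape (Fin n) C := HasFiniteBiproducts.out n
    set Q0 := Projective.over V₀ with hQ0
    set π' : Q0 ⟶ V₀ := Projective.π V₀ with hπ'
    set ε : Q0 ⟶ W := π' ≫ g with hε
    haveI : Epi ε := epi_comp _ _
    -- p : P ⟶ kernel g is epi
    set p : P ⟶ kernel g := kernel.lift g v w with hp
    have hpι : p ≫ kernel.ι g = v := kernel.lift_ι _ _ _
    haveI hpe : Epi p := by
      have h1 : Epi (ShortComplex.mk v g w).toCycles :=
        (ShortComplex.exact_iff_epi_toCycles _).1 hex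
      have h2 : p = (ShortComplex.mk v g w).toCycles ≫
          (ShortComplex.mk v g w).cyclesIsoKernel.hom := by
        rw [← cancel_mono (kernel.ι g), hpι, Category.assoc,
          ShortComplex.cyclesIsoKernel_hom, kernel.lift_ι, ShortComplex.toCycles_i]
      rw [h2]; exact epi_comp _ _
    -- the comparison maps between the kernels
    have hγ0 : (kernel.ι ε ≫ π') ≫ g = 0 := by rw [Category.assoc, ← hε, kernel.condition]
    set γ : kernel ε ⟶ kernel g := kernel.lift g (kernel.ι ε ≫ π') hγ0 with hγ
    have hγι : γ ≫ kernel.ι g = kernel.ι ε ≫ π' := kernel.lift_ι _ _ _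
    have hδ0 : kernel.ι π' ≫ ε = 0 := by rw [hε, ← Category.assoc, kernel.condition, zero_comp]
    set δ : kernel π' ⟶ kernel ε := kernel.lift ε (kernel.ι π') hδ0 with hδ
    have hδι : δ ≫ kernel.ι ε = kernel.ι π' := kernel.lift_ι _ _ _
    -- γ is epi
    haveI hγepi : Epi γ := by
      apply Abelian.Pseudoelement.epi_of_pseudo_surjective
      intro k
      obtain ⟨q, hq⟩ := Abelian.Pseudoelement.pseudo_surjective_of_epi π' (kernel.ι g k)
      have hq0 : ε q = 0 := by
        rw [hε, Abelian.Pseudoelement.comp_apply, hq, ← Abelian.Pseudoelement.comp_apply,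
          kernel.condition, Abelian.Pseudoelement.zero_apply]
      obtain ⟨k', hk'⟩ := Abelian.Pseudoelement.pseudo_exact_of_exact
        (ShortComplex.exact_kernel ε) q hq0
      refine ⟨k', Abelian.Pseudoelement.pseudo_injective_of_mono (kernel.ι g) ?_⟩
      rw [← Abelian.Pseudoelement.comp_apply, hγι, Abelian.Pseudoelement.comp_apply, hk', hq]
    -- exactness of kernel π' ⟶ kernel ε ⟶ kernel g
    have hw2 : δ ≫ γ = 0 := by
      rw [← cancel_mono (kernel.ι g), Category.assoc, hγι, ← Category.assoc, hδι, zero_comp,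
        kernel.condition]
    have hexact2 : (ShortComplex.mk δ γ hw2).Exact := by
      apply Abelian.Pseudoelement.exact_of_pseudo_exact
      intro b hb
      have hb' : π' (kernel.ι ε b) = 0 := by
        rw [← Abelian.Pseudoelement.comp_apply, ← hγι, Abelian.Pseudoelement.comp_apply, hb,
          Abelian.Pseudoelement.apply_zero]
      obtain ⟨a, ha⟩ := Abelian.Pseudoelement.pseudo_exact_of_exact
        (ShortComplex.exact_kernel π') (kernel.ι ε b) hb'
      refine ⟨a, Abelian.Pseudoelement.pseudo_injective_of_mono (kernel.ι ε) ?_⟩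
      rw [← Abelian.Pseudoelement.comp_apply, hδι, ha]
    haveI : Epi (ShortComplex.mk δ γ hw2).g := hγepi
    -- the extension property for π' coming from τ-rigidity
    have hcons : Stmt3Aux.LiftsAlong π' Z := (Stmt3Aux.ext1Zero_iff π' Z).1 (hV V₀ hV₀ Z hZ)
    -- conclude via the extension property for ε
    refine (Stmt3Aux.ext1Zero_iff ε Z).2 ?_
    intro h
    obtain ⟨ψ₁, hψ₁⟩ := hcons (δ ≫ h)
    have hδh2 : δ ≫ (h - kernel.ι ε ≫ ψ₁) = 0 := by
      rw [Preadditive.comp_sub, ← Category.assoc, hδι, hψ₁, sub_self]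
    have hγh₃ : γ ≫ hexact2.desc (h - kernel.ι ε ≫ ψ₁) hδh2 = h - kernel.ι ε ≫ ψ₁ :=
      hexact2.g_desc _ _
    set h₃ : kernel g ⟶ Z := hexact2.desc (h - kernel.ι ε ≫ ψ₁) hδh2 with hh₃
    -- extend h₃ along kernel.ι g using the approximation
    set ℓ : P ⟶ ⨁ f := Projective.factorThru (p ≫ h₃) e with hℓ
    have hℓe : ℓ ≫ e = p ≫ h₃ := Projective.factorThru_comp _ _
    choose t ht using fun i => happ (f i) (hf i) (ℓ ≫ biproduct.π f i)
    have hvt : v ≫ biproduct.lift t = ℓ := by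
      apply biproduct.hom_ext
      intro i
      rw [Category.assoc, biproduct.lift_π, ht]
    have hks : kernel.ι g ≫ biproduct.lift t ≫ e = h₃ := by
      rw [← cancel_epi p, ← Category.assoc, hpι, ← Category.assoc, hvt, hℓe]
    refine ⟨ψ₁ + π' ≫ biproduct.lift t ≫ e, ?_⟩
    rw [Preadditive.comp_add, ← Category.assoc (kernel.ι ε) π', ← hγι, Category.assoc, hks,
      hγh₃]
    abel
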